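/- Let X be a finite subset of the unit circle {z ∈ ℂ : |z| = 1} such that the set A(X) of products conj(x)·y over distinct x, y ∈ X is contained in {a, b, x₀ + iy₀, x₀ − iy₀} for some real numbers a, b, x₀, y₀ with a ≠ b and y₀ ≠ 0. Then |X| ≤ 4. -/

import Mathlib

/-- If `X` is a finite set on the complex unit circle whose pairwise Hermitian products
`conj(x)·y` (for distinct `x,y`) lie in `{a, b, x₀+iy₀, x₀−iy₀}` with `a ≠ b` real and
`y₀ ≠ 0` real, then `|X| ≤ 4`. -/
theorem stmt_7 (X : Finset ℂ) (hX : ∀ z ∈ X, ‖z‖ = 1)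
    (a b x₀ y₀ : ℝ) (hab : a ≠ b) (hy : y₀ ≠ 0)
    (hA : ∀ x ∈ X, ∀ y ∈ X, x ≠ y →
      (starRingEnd ℂ x) * y ∈
        ({(a : ℂ), (b : ℂ), (x₀ : ℂ) + (y₀ : ℂ) * Complex.I,
          (x₀ : ℂ) - (y₀ : ℂ) * Complex.I} : Set ℂ)) :
    X.card ≤ 4 := by
  by_contra hcard
  push_neg at hcard
  obtain ⟨x, hx⟩ : X.Nonempty := Finset.card_pos.mp (by omega)
  have hx0 : x ≠ 0 := by
    intro h
    have := hX x hx
    rw [h] at this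
    simp at this
  have hcx : (starRingEnd ℂ) x ≠ 0 := by simpa using hx0
  set S := X.erase x with hS
  have hScard : 4 ≤ S.card := by
    rw [hS, Finset.card_erase_of_mem hx]; omega
  set T : Finset ℂ := {(a : ℂ), (b : ℂ), (x₀ : ℂ) + (y₀ : ℂ) * Complex.I,
      (x₀ : ℂ) - (y₀ : ℂ) * Complex.I} with hT
  have hTcard : T.card ≤ 4 := by
    refine le_trans (Finset.card_insert_le _ _) ?_
    refine Nat.succ_le_succ (le_trans (Finset.card_insert_le _ _) ?_)
    refine Nat.succ_le_succ (le_trans (Finset.card_insert_le _ _) ?_)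
    simp
  have himg : S.image (fun y => (starRingEnd ℂ) x * y) ⊆ T := by
    intro z hz
    simp only [Finset.mem_image] at hz
    obtain ⟨y, hyS, rfl⟩ := hz
    have hyX : y ∈ X := Finset.mem_of_mem_erase hyS
    have hxy : x ≠ y := fun h => (Finset.ne_of_mem_erase hyS) h.symm
    have h := hA x hx y hyX hxy
    simp only [Set.mem_insert_iff, Set.mem_singleton_iff] at h
    simp only [hT, Finset.mem_insert, Finset.mem_singleton]
    tauto
  have hinj : Set.InjOn (fun y => (starRingEnd ℂ) x * y) S := by
    intro u _ v _ h
    exact mul_left_cancel₀ hcx h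
  have hicard : (S.image (fun y => (starRingEnd ℂ) x * y)).card = S.card :=
    Finset.card_image_of_injOn hinj
  have heq : S.image (fun y => (starRingEnd ℂ) x * y) = T :=
    Finset.eq_of_subset_of_card_le himg (by omega)
  have key : ∀ c : ℝ, (c : ℂ) ∈ T → c = -1 := by
    intro c hc
    rw [← heq] at hc
    obtain ⟨y, hyS, hyc⟩ := Finset.mem_image.mp hc
    have hyX : y ∈ X := Finset.mem_of_mem_erase hyS
    have habs : ‖(starRingEnd ℂ) x * y‖ = 1 := by
      rw [norm_mul, Complex.norm_conj, hX x hx, hX y hyX]; ring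
    rw [hyc] at habs
    have habs' : |c| = 1 := by simpa using habs
    rcases (abs_eq (by norm_num : (0:ℝ) ≤ 1)).mp habs' with h1 | h1
    · exfalso
      have hxx : (starRingEnd ℂ) x * x = 1 := by
        rw [mul_comm, Complex.mul_conj]
        norm_cast
        rw [Complex.normSq_eq_norm_sq, hX x hx]; norm_num
      have h2 : (starRingEnd ℂ) x * y = (starRingEnd ℂ) x * x := by
        rw [hyc, h1, hxx]; norm_num
      exact Finset.ne_of_mem_erase hyS (mul_left_cancel₀ hcx h2)
    · exact h1
  have ha : a = -1 := key a (by simp [hT])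
  have hb : b = -1 := key b (by simp [hT])
  exact hab (ha.trans hb.symm)
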